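/- For any unit vector (v1,v2,v3) ∈ ℝ³ (i.e. v1²+v2²+v3² = 1), one has P(v1,v2,v3) ≤ 1/3, where P(v1,v2,v3) = -v2 v1² + (√3/2) v1 v3² + (1/3) v2³ + (1/2) v2 v3². Equivalently, 1 - 3P(v) ≥ 0 on the unit sphere. -/
import Mathlib


/-- For any unit vector (v1,v2,v3) ∈ ℝ³, P(v1,v2,v3) ≤ 1/3, equivalently 1 - 3P(v) ≥ 0. -/
theorem P_le_third_on_sphere (P : ℝ → ℝ → ℝ → ℝ)
    (hP : ∀ v1 v2 v3 : ℝ, P v1 v2 v3 =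
      -v2 * v1 ^ 2 + (Real.sqrt 3 / 2) * v1 * v3 ^ 2 + (1 / 3) * v2 ^ 3 + (1 / 2) * v2 * v3 ^ 2)
    (v1 v2 v3 : ℝ) (hunit : v1 ^ 2 + v2 ^ 2 + v3 ^ 2 = 1) :
    P v1 v2 v3 ≤ 1 / 3 ∧ 0 ≤ 1 - 3 * P v1 v2 v3 := by
  rw [hP]
  set s := Real.sqrt 3 with hsdef
  have hs : s ^ 2 = 3 := Real.sq_sqrt (by norm_num)
  set u : ℝ := (s * v1 + v2) / 2 with hu
  have hu1 : u ^ 2 ≤ 1 := by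
    rw [hu]; nlinarith [sq_nonneg (v1 - s * v2), sq_nonneg v3, hs]
  have hkey : 3 * (-v2 * v1 ^ 2 + s / 2 * v1 * v3 ^ 2 + 1 / 3 * v2 ^ 3 + 1 / 2 * v2 * v3 ^ 2)
      = 3 * u - 4 * u ^ 3 := by
    have : 3 * (-v2 * v1 ^ 2 + s / 2 * v1 * v3 ^ 2 + 1 / 3 * v2 ^ 3 + 1 / 2 * v2 * v3 ^ 2)
        = 3 * u * (v1 ^ 2 + v2 ^ 2 + v3 ^ 2) - 4 * u ^ 3 := by
      rw [hu]; linear_combination (v1 ^ 3 * s / 2 + 3 / 2 * v1 ^ 2 * v2) * hs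
    rw [this, hunit]; ring
  have hge : 0 ≤ 1 - (3 * u - 4 * u ^ 3) := by
    have h1 : -1 ≤ u := by nlinarith
    nlinarith [sq_nonneg (2 * u - 1), h1]
  constructor
  · nlinarith [hkey, hge]
  · nlinarith [hkey, hge]
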